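/- If the support of the initial loopless multigraph G(0) on n ≥ 2 vertices is bipartite, then every NSB evacuation run has evacuation time T exactly equal to Δ(0), the maximum degree of G(0), and moreover Δ(0) equals the minimum evacuation time X′ of G(0); that is, NSB is evacuation-time-optimal in bipartite graphs. -/

import Mathlib

open scoped Classical

namespace NSBPaper

variable {V : Type} [Fintype V] [DecidableEq V]

/-- Degree of a vertex in a loopless multigraph given by multiplicity function `w`. -/
def deg (w : V → V → ℕ) (v : V) : ℕ := ∑ u, w v u

/-- Maximum degree of the multigraph. -/
def maxDeg (w : V → V → ℕ) : ℕ := Finset.univ.sup fun v => deg w v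

/-- The support simple graph of a multigraph: `u` and `v` are adjacent iff `u ≠ v`
and there is at least one multi-edge between them. -/
def support (w : V → V → ℕ) : SimpleGraph V where
  Adj u v := u ≠ v ∧ 1 ≤ w u v ∧ 1 ≤ w v u
  symm := ⟨fun u v h => ⟨h.1.symm, h.2.2, h.2.1⟩⟩
  loopless := ⟨fun v h => h.1 rfl⟩

/-- A set of unordered pairs `M` saturates a vertex `v` if some pair of `M` contains `v`. -/
def Saturates (M : Finset (Sym2 V)) (v : V) : Prop := ∃ e ∈ M, v ∈ e

/-- `M` is a matching of the multigraph `w`: its elements are non-loop edges of the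
support, and no two distinct elements share a vertex. -/
def IsMatching (w : V → V → ℕ) (M : Finset (Sym2 V)) : Prop :=
  (∀ e ∈ M, ¬ e.IsDiag) ∧
  (∀ u v : V, s(u, v) ∈ M → 1 ≤ w u v) ∧
  (∀ e ∈ M, ∀ f ∈ M, e ≠ f → ∀ x : V, x ∈ e → x ∉ f)

/-- `M` is a maximal matching of `w`: no pair can be added keeping it a matching. -/
def IsMaximalMatching (w : V → V → ℕ) (M : Finset (Sym2 V)) : Prop :=
  IsMatching w M ∧ ∀ e : Sym2 V, e ∉ M → ¬ IsMatching w (insert e M)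

/-- Removing a matching `M` from the multigraph `w`: the multiplicity of each pair in `M`
decreases by one. -/
def removeMatching (w : V → V → ℕ) (M : Finset (Sym2 V)) : V → V → ℕ :=
  fun u v => if s(u, v) ∈ M then w u v - 1 else w u v

/-- The subgraph of `G` induced by `Z` is bipartite: there is a set `A` such that every
edge of `G` inside `Z` joins `A` to its complement. -/
def BipartiteOn (G : SimpleGraph V) (Z : Set V) : Prop :=
  ∃ A : Set V, ∀ ⦃u v : V⦄, u ∈ Z → v ∈ Z → G.Adj u v → (u ∈ A ↔ v ∉ A)

/-- The edge multiset of `w` can be partitioned into `T` matchings. -/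
def CanEvacuate (w : V → V → ℕ) (T : ℕ) : Prop :=
  ∃ M : Fin T → Finset (Sym2 V),
    (∀ j, IsMatching w (M j)) ∧
    ∀ u v : V, (Finset.univ.filter fun j => s(u, v) ∈ M j).card = w u v

/-- The vertex-weight of a matching: the sum of the weights of its saturated vertices. -/
noncomputable def matchWeight (φ : V → ℕ) (M : Finset (Sym2 V)) : ℕ :=
  ∑ v : V, if Saturates M v then φ v else 0

/-- `Rfun M k i = 1` iff vertex `i` is saturated by the matching chosen in slot `k`. -/
noncomputable def Rfun (M : ℕ → Finset (Sym2 V)) (k : ℕ) (i : V) : ℕ :=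
  if Saturates (M k) i then 1 else 0

/-- `Ufun M k i` is `R i (k-1) * R i (k-2)` if `k ≡ 2 [MOD 3]` and `R i (k-1)` otherwise,
with `R i k = 0` for `k < 0`. -/
noncomputable def Ufun (M : ℕ → Finset (Sym2 V)) (k : ℕ) (i : V) : ℕ :=
  if k = 0 then 0
  else if k % 3 = 2 then Rfun M (k - 1) i * Rfun M (k - 2) i
  else Rfun M (k - 1) i

/-- Vertex `i` is heavy in `w`: `n * d(i) ≥ (n - 1) * Δ`. -/
def Heavy (w : V → V → ℕ) (i : V) : Prop :=
  (Fintype.card V - 1) * maxDeg w ≤ Fintype.card V * deg w i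

/-- Vertex `i` is critical in `w`: its degree is the maximum degree. -/
def Critical (w : V → V → ℕ) (i : V) : Prop := deg w i = maxDeg w

/-- The NSB weight of vertex `i`, where `u i` records whether `i` received enough
service previously. -/
noncomputable def nsbWeight (w : V → V → ℕ) (u : V → ℕ) (i : V) : ℕ :=
  if Heavy w i then deg w i * (2 - u i) else deg w i

/-- The LC-NSB weight of vertex `i`. -/
noncomputable def lcnsbWeight (w : V → V → ℕ) (u : V → ℕ) (i : V) : ℕ :=
  if Critical w i then 5 - 2 * u i
  else if Heavy w i then 4 - 2 * u i
  else 1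

/-- An NSB evacuation run on the initial multigraph `w0`: in each slot `k`, a matching
`M k` of `G k` maximizing the total NSB weight of saturated vertices is removed. -/
structure NSBRun (w0 : V → V → ℕ) where
  G : ℕ → V → V → ℕ
  M : ℕ → Finset (Sym2 V)
  init : G 0 = w0
  step : ∀ k, G (k + 1) = removeMatching (G k) (M k)
  matching : ∀ k, IsMatching (G k) (M k)
  opt : ∀ k, ∀ M' : Finset (Sym2 V), IsMatching (G k) M' →
    matchWeight (nsbWeight (G k) (Ufun M k)) M' ≤ matchWeight (nsbWeight (G k) (Ufun M k)) (M k)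

/-- An LC-NSB evacuation run on the initial multigraph `w0`. -/
structure LCNSBRun (w0 : V → V → ℕ) where
  G : ℕ → V → V → ℕ
  M : ℕ → Finset (Sym2 V)
  init : G 0 = w0
  step : ∀ k, G (k + 1) = removeMatching (G k) (M k)
  matching : ∀ k, IsMatching (G k) (M k)
  opt : ∀ k, ∀ M' : Finset (Sym2 V), IsMatching (G k) M' →
    matchWeight (lcnsbWeight (G k) (Ufun M k)) M' ≤
      matchWeight (lcnsbWeight (G k) (Ufun M k)) (M k)


section Basics

variable {V : Type} [Fintype V] [DecidableEq V]

lemma sat_iff {M : Finset (Sym2 V)} {v : V} :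
    Saturates M v ↔ ∃ y, s(v, y) ∈ M := by
  constructor
  · rintro ⟨e, he, hv⟩
    exact ⟨Sym2.Mem.other hv, by rwa [Sym2.other_spec hv]⟩
  · rintro ⟨y, hy⟩
    exact ⟨s(v, y), hy, by simp⟩

lemma isMatching_subset {w : V → V → ℕ} {M M' : Finset (Sym2 V)}
    (h : M' ⊆ M) (hM : IsMatching w M) : IsMatching w M' :=
  ⟨fun e he => hM.1 e (h he), fun u v huv => hM.2.1 u v (h huv),
   fun e he f hf hef x hx => hM.2.2 e (h he) f (h hf) hef x hx⟩

lemma unique_partner {w : V → V → ℕ} {M : Finset (Sym2 V)} (hM : IsMatching w M)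
    {v a b : V} (ha : s(v, a) ∈ M) (hb : s(v, b) ∈ M) : a = b := by
  by_cases hab : s(v, a) = s(v, b)
  · exact Sym2.congr_right.mp hab
  · exact absurd (Sym2.mem_mk_left v a) (fun hv => hM.2.2 _ ha _ hb hab v hv (Sym2.mem_mk_left v b))

lemma not_sat_of_erase {w : V → V → ℕ} {M : Finset (Sym2 V)} (hM : IsMatching w M)
    {v a : V} (ha : s(v, a) ∈ M) : ¬ Saturates (M.erase s(v, a)) v := by
  rintro ⟨e, he, hv⟩
  have heM := Finset.mem_of_mem_erase he
  have hne : e ≠ s(v, a) := Finset.ne_of_mem_erase he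
  exact hM.2.2 e heM _ ha hne v hv (Sym2.mem_mk_left v a)

lemma sat_insert_iff {M : Finset (Sym2 V)} {e : Sym2 V} {v : V} :
    Saturates (insert e M) v ↔ v ∈ e ∨ Saturates M v := by
  constructor
  · rintro ⟨f, hf, hv⟩
    rcases Finset.mem_insert.mp hf with h | h
    · exact Or.inl (h ▸ hv)
    · exact Or.inr ⟨f, h, hv⟩
  · rintro (h | ⟨f, hf, hv⟩)
    · exact ⟨e, Finset.mem_insert_self _ _, h⟩
    · exact ⟨f, Finset.mem_insert_of_mem hf, hv⟩

lemma isMatching_insert {w : V → V → ℕ} {M : Finset (Sym2 V)} (hM : IsMatching w M)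
    {a b : V} (hab : a ≠ b) (hwab : 1 ≤ w a b) (hwba : 1 ≤ w b a)
    (hsa : ¬ Saturates M a) (hsb : ¬ Saturates M b) :
    IsMatching w (insert s(a, b) M) := by
  refine ⟨?_, ?_, ?_⟩
  · intro e he
    rcases Finset.mem_insert.mp he with h | h
    · subst h; simpa [Sym2.isDiag_iff_proj_eq] using hab
    · exact hM.1 e h
  · intro u v huv
    rcases Finset.mem_insert.mp huv with h | h
    · rcases Sym2.eq_iff.mp h with ⟨rfl, rfl⟩ | ⟨rfl, rfl⟩
      · exact hwab
      · exact hwba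
    · exact hM.2.1 u v h
  · intro e he f hf hef x hx hxf
    rcases Finset.mem_insert.mp he with h1 | h1 <;> rcases Finset.mem_insert.mp hf with h2 | h2
    · exact hef (h1.trans h2.symm)
    · subst h1
      rcases Sym2.mem_iff.mp hx with rfl | rfl
      · exact hsa ⟨f, h2, hxf⟩
      · exact hsb ⟨f, h2, hxf⟩
    · subst h2
      rcases Sym2.mem_iff.mp hxf with rfl | rfl
      · exact hsa ⟨e, h1, hx⟩
      · exact hsb ⟨e, h1, hx⟩
    · exact hM.2.2 e h1 f h2 hef x hx hxf

end Basics
section Exchange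

variable {V : Type} [Fintype V] [DecidableEq V]

lemma sat_of_mem {M : Finset (Sym2 V)} {e : Sym2 V} {v : V} (he : e ∈ M) (hv : v ∈ e) :
    Saturates M v := ⟨e, he, hv⟩

lemma nondiag_ne {w : V → V → ℕ} {M : Finset (Sym2 V)} (hM : IsMatching w M)
    {a b : V} (h : s(a, b) ∈ M) : a ≠ b := by
  intro hab
  exact hM.1 _ h (by simp [hab, Sym2.isDiag_iff_proj_eq])

/-- The easy case of the exchange: add an edge between two unsaturated vertices. -/
lemma exchange_easy {w : V → V → ℕ} {A : Set V} {M N : Finset (Sym2 V)}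
    (hM : IsMatching w M) (hN : IsMatching w N)
    (hMA : ∀ u t : V, s(u, t) ∈ M → (u ∈ A ↔ t ∉ A))
    (hNA : ∀ u t : V, s(u, t) ∈ N → (u ∈ A ↔ t ∉ A))
    {v y : V} (hy : s(v, y) ∈ N) (hMv : ¬ Saturates M v) (hMy : ¬ Saturates M y) :
    ∃ P : Finset (Sym2 V), IsMatching w P ∧
      (∀ u t : V, s(u, t) ∈ P → (u ∈ A ↔ t ∉ A)) ∧
      Saturates P v ∧
      (∀ z, ¬ Saturates M z → ¬ Saturates N z → ¬ Saturates P z) ∧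
      ((∀ z, Saturates M z → Saturates P z) ∨
        ∃ x, Saturates M x ∧ ¬ Saturates N x ∧ (x ∈ A ↔ v ∈ A) ∧
          ∀ z, Saturates M z → z ≠ x → Saturates P z) := by
  have hvy : v ≠ y := nondiag_ne hN hy
  have hwvy : 1 ≤ w v y := hN.2.1 v y hy
  have hwyv : 1 ≤ w y v := hN.2.1 y v (by rwa [Sym2.eq_swap])
  refine ⟨insert s(v, y) M, isMatching_insert hM hvy hwvy hwyv hMv hMy, ?_, ?_, ?_, ?_⟩
  · intro u t hut
    rcases Finset.mem_insert.mp hut with h | h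
    · rcases Sym2.eq_iff.mp h with ⟨rfl, rfl⟩ | ⟨rfl, rfl⟩
      · exact hNA u t hy
      · have := hNA t u hy; tauto
    · exact hMA u t h
  · exact ⟨s(v, y), Finset.mem_insert_self _ _, Sym2.mem_mk_left v y⟩
  · intro z hzM hzN hzP
    rcases sat_insert_iff.mp hzP with h | h
    · rcases Sym2.mem_iff.mp h with rfl | rfl
      · exact hzN ⟨_, hy, Sym2.mem_mk_left _ _⟩
      · exact hzN ⟨_, hy, Sym2.mem_mk_right _ _⟩
    · exact hzM h
  · exact Or.inl fun z hz => sat_insert_iff.mpr (Or.inr hz)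

lemma exchange (w : V → V → ℕ) (A : Set V) :
    ∀ n : ℕ, ∀ M N : Finset (Sym2 V), M.card ≤ n →
      IsMatching w M → IsMatching w N →
      (∀ u t : V, s(u, t) ∈ M → (u ∈ A ↔ t ∉ A)) →
      (∀ u t : V, s(u, t) ∈ N → (u ∈ A ↔ t ∉ A)) →
      ∀ v : V, Saturates N v → ¬ Saturates M v →
      ∃ P : Finset (Sym2 V), IsMatching w P ∧
        (∀ u t : V, s(u, t) ∈ P → (u ∈ A ↔ t ∉ A)) ∧
        Saturates P v ∧
        (∀ z, ¬ Saturates M z → ¬ Saturates N z → ¬ Saturates P z) ∧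
        ((∀ z, Saturates M z → Saturates P z) ∨
          ∃ x, Saturates M x ∧ ¬ Saturates N x ∧ (x ∈ A ↔ v ∈ A) ∧
            ∀ z, Saturates M z → z ≠ x → Saturates P z) := by
  intro n
  induction n with
  | zero =>
    intro M N hcard hM hN hMA hNA v hNv hMv
    obtain ⟨y, hy⟩ := sat_iff.mp hNv
    have hM0 : M = ∅ := Finset.card_eq_zero.mp (Nat.le_zero.mp hcard)
    have hMy : ¬ Saturates M y := by subst hM0; rintro ⟨e, he, -⟩; exact absurd he (Finset.notMem_empty e)
    exact exchange_easy hM hN hMA hNA hy hMv hMy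
  | succ n IH =>
    intro M N hcard hM hN hMA hNA v hNv hMv
    obtain ⟨y, hy⟩ := sat_iff.mp hNv
    have hvy : v ≠ y := nondiag_ne hN hy
    by_cases hMy : Saturates M y
    case neg => exact exchange_easy hM hN hMA hNA hy hMv hMy
    obtain ⟨z0, hz0⟩ := sat_iff.mp hMy  -- s(y, z0) ∈ M
    have hyz0 : y ≠ z0 := nondiag_ne hM hz0
    have hz0v : z0 ≠ v := by
      intro h; exact hMv ⟨_, hz0, h ▸ Sym2.mem_mk_right y z0⟩
    set M' := M.erase s(y, z0) with hM'def
    set N' := N.erase s(v, y) with hN'def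
    have hM'sub : M' ⊆ M := Finset.erase_subset _ _
    have hN'sub : N' ⊆ N := Finset.erase_subset _ _
    have hM'm : IsMatching w M' := isMatching_subset hM'sub hM
    have hN'm : IsMatching w N' := isMatching_subset hN'sub hN
    have hM'A : ∀ u t : V, s(u, t) ∈ M' → (u ∈ A ↔ t ∉ A) := fun u t h => hMA u t (hM'sub h)
    have hN'A : ∀ u t : V, s(u, t) ∈ N' → (u ∈ A ↔ t ∉ A) := fun u t h => hNA u t (hN'sub h)
    have hM'y : ¬ Saturates M' y := not_sat_of_erase hM hz0
    have hM'v : ¬ Saturates M' v := fun h => hMv ⟨h.choose, hM'sub h.choose_spec.1, h.choose_spec.2⟩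
    have hN'v : ¬ Saturates N' v := not_sat_of_erase hN hy
    have hN'y : ¬ Saturates N' y := by
      have h1 : s(y, v) ∈ N := by rwa [Sym2.eq_swap]
      have := not_sat_of_erase hN h1
      rwa [show N.erase s(y, v) = N' by rw [hN'def, Sym2.eq_swap]] at this
    have hM'z0 : ¬ Saturates M' z0 := by
      have h1 : s(z0, y) ∈ M := by rwa [Sym2.eq_swap]
      have := not_sat_of_erase hM h1
      rwa [show M.erase s(z0, y) = M' by rw [hM'def, Sym2.eq_swap]] at this
    have hz0A : (z0 ∈ A ↔ v ∈ A) := by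
      have h1 := hNA v y hy
      have h2 := hMA y z0 hz0
      tauto
    have hcard' : M'.card ≤ n := by
      rw [hM'def, Finset.card_erase_of_mem hz0]
      omega
    by_cases hz0N' : Saturates N' z0
    case neg =>
      -- z0 unsaturated by N: stop, P = insert s(v,y) M'
      have hz0N : ¬ Saturates N z0 := by
        rintro ⟨f, hf, hzf⟩
        by_cases hfe : f = s(v, y)
        · subst hfe
          rcases Sym2.mem_iff.mp hzf with rfl | rfl
          · exact hz0v rfl
          · exact hyz0 rfl
        · exact hz0N' ⟨f, Finset.mem_erase.mpr ⟨hfe, hf⟩, hzf⟩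
      have hwvy : 1 ≤ w v y := hN.2.1 v y hy
      have hwyv : 1 ≤ w y v := hN.2.1 y v (by rwa [Sym2.eq_swap])
      refine ⟨insert s(v, y) M', isMatching_insert hM'm hvy hwvy hwyv hM'v hM'y, ?_, ?_, ?_, ?_⟩
      · intro u t hut
        rcases Finset.mem_insert.mp hut with h | h
        · rcases Sym2.eq_iff.mp h with ⟨rfl, rfl⟩ | ⟨rfl, rfl⟩
          · exact hNA u t hy
          · have := hNA t u hy; tauto
        · exact hM'A u t h
      · exact ⟨s(v, y), Finset.mem_insert_self _ _, Sym2.mem_mk_left v y⟩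
      · intro z hzM hzN hzP
        rcases sat_insert_iff.mp hzP with h | h
        · rcases Sym2.mem_iff.mp h with rfl | rfl
          · exact hzN ⟨_, hy, Sym2.mem_mk_left _ _⟩
          · exact hzN ⟨_, hy, Sym2.mem_mk_right _ _⟩
        · exact hzM ⟨h.choose, hM'sub h.choose_spec.1, h.choose_spec.2⟩
      · refine Or.inr ⟨z0, ⟨_, hz0, Sym2.mem_mk_right y z0⟩, hz0N, hz0A, ?_⟩
        intro z hzM hzne
        rcases hzM with ⟨f, hf, hzf⟩
        by_cases hfe : f = s(y, z0)
        · subst hfe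
          rcases Sym2.mem_iff.mp hzf with rfl | rfl
          · exact sat_insert_iff.mpr (Or.inl (Sym2.mem_mk_right v z))
          · exact absurd rfl hzne
        · exact sat_insert_iff.mpr (Or.inr ⟨f, Finset.mem_erase.mpr ⟨hfe, hf⟩, hzf⟩)
    case pos =>
      -- recurse from z0
      obtain ⟨P', hP'm, hP'A, hP'z0, hP'sub, hP'disj⟩ :=
        IH M' N' hcard' hM'm hN'm hM'A hN'A z0 hz0N' hM'z0
      have hvP' : ¬ Saturates P' v := hP'sub v hM'v hN'v
      have hyP' : ¬ Saturates P' y := hP'sub y hM'y hN'y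
      have hwvy : 1 ≤ w v y := hN.2.1 v y hy
      have hwyv : 1 ≤ w y v := hN.2.1 y v (by rwa [Sym2.eq_swap])
      refine ⟨insert s(v, y) P', isMatching_insert hP'm hvy hwvy hwyv hvP' hyP', ?_, ?_, ?_, ?_⟩
      · intro u t hut
        rcases Finset.mem_insert.mp hut with h | h
        · rcases Sym2.eq_iff.mp h with ⟨rfl, rfl⟩ | ⟨rfl, rfl⟩
          · exact hNA u t hy
          · have := hNA t u hy; tauto
        · exact hP'A u t h
      · exact ⟨s(v, y), Finset.mem_insert_self _ _, Sym2.mem_mk_left v y⟩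
      · intro z hzM hzN hzP
        rcases sat_insert_iff.mp hzP with h | h
        · rcases Sym2.mem_iff.mp h with rfl | rfl
          · exact hzN ⟨_, hy, Sym2.mem_mk_left _ _⟩
          · exact hzN ⟨_, hy, Sym2.mem_mk_right _ _⟩
        · have hzM' : ¬ Saturates M' z := fun h' => hzM ⟨h'.choose, hM'sub h'.choose_spec.1, h'.choose_spec.2⟩
          have hzN' : ¬ Saturates N' z := fun h' => hzN ⟨h'.choose, hN'sub h'.choose_spec.1, h'.choose_spec.2⟩
          exact hP'sub z hzM' hzN' h
      · -- the disjunction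
        have hliftM : ∀ z, Saturates M z → z ≠ y → z ≠ z0 → Saturates M' z := by
          intro z hz hzy hzz0
          rcases hz with ⟨f, hf, hzf⟩
          refine ⟨f, Finset.mem_erase.mpr ⟨?_, hf⟩, hzf⟩
          intro hfe; subst hfe
          rcases Sym2.mem_iff.mp hzf with rfl | rfl
          · exact hzy rfl
          · exact hzz0 rfl
        have hliftP : ∀ z, Saturates P' z → Saturates (insert s(v, y) P') z :=
          fun z h => sat_insert_iff.mpr (Or.inr h)
        have hsaty : Saturates (insert s(v, y) P') y :=
          sat_insert_iff.mpr (Or.inl (Sym2.mem_mk_right v y))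
        have hsatz0 : Saturates (insert s(v, y) P') z0 := hliftP z0 hP'z0
        rcases hP'disj with hleft | ⟨x, hxM', hxN', hxA, hall⟩
        · refine Or.inl ?_
          intro z hz
          by_cases h1 : z = y; · subst h1; exact hsaty
          by_cases h2 : z = z0; · subst h2; exact hsatz0
          exact hliftP z (hleft z (hliftM z hz h1 h2))
        · refine Or.inr ⟨x, ?_, ?_, ?_, ?_⟩
          · exact ⟨hxM'.choose, hM'sub hxM'.choose_spec.1, hxM'.choose_spec.2⟩
          · -- x not N-saturated
            have hxy : x ≠ y := fun h => hM'y (h ▸ hxM')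
            have hxv : x ≠ v := fun h => hM'v (h ▸ hxM')
            rintro ⟨f, hf, hxf⟩
            by_cases hfe : f = s(v, y)
            · subst hfe
              rcases Sym2.mem_iff.mp hxf with rfl | rfl
              · exact hxv rfl
              · exact hxy rfl
            · exact hxN' ⟨f, Finset.mem_erase.mpr ⟨hfe, hf⟩, hxf⟩
          · tauto
          · intro z hz hzx
            by_cases h1 : z = y; · subst h1; exact hsaty
            by_cases h2 : z = z0
            · subst h2; exact hsatz0
            · exact hliftP z (hall z (hliftM z hz h1 h2) hzx)

end Exchange
section Hall

variable {V : Type} [Fintype V] [DecidableEq V]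

lemma exists_deg_pos {w : V → V → ℕ} (hD : 1 ≤ maxDeg w) :
    ∃ v u : V, 1 ≤ w v u := by
  rw [maxDeg, Finset.le_sup_iff (by norm_num : (0:ℕ) < 1)] at hD
  obtain ⟨v, -, hv⟩ := hD
  by_contra h
  push_neg at h
  have : deg w v = 0 := Finset.sum_eq_zero fun u _ => by have := h v u; omega
  omega

lemma exists_side_matching {w : V → V → ℕ}
    (hsym : ∀ u v, w u v = w v u) (hlo : ∀ v, w v v = 0)
    (hD : 1 ≤ maxDeg w) (A : Set V)
    (hA : ∀ u t : V, 1 ≤ w u t → (u ∈ A ↔ t ∉ A)) :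
    ∃ N : Finset (Sym2 V), IsMatching w N ∧
      (∀ u t : V, s(u, t) ∈ N → (u ∈ A ↔ t ∉ A)) ∧
      ∀ i, Heavy w i → i ∈ A → Saturates N i := by
  classical
  set n := Fintype.card V with hn
  let ι := {i : V // Heavy w i ∧ i ∈ A}
  let t : ι → Finset V := fun i => Finset.univ.filter fun u => 1 ≤ w i.1 u
  have hall : ∀ s : Finset ι, s.card ≤ (s.biUnion t).card := by
    intro s
    set S : Finset V := s.image Subtype.val with hS
    set T : Finset V := s.biUnion t with hT
    have hcardS : S.card = s.card := Finset.card_image_of_injective s Subtype.val_injective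
    have hmemS : ∀ i ∈ S, Heavy w i ∧ i ∈ A := by
      intro i hi
      obtain ⟨j, hj, rfl⟩ := Finset.mem_image.mp hi
      exact j.2
    have key1 : ∀ i ∈ S, deg w i ≤ ∑ u ∈ T, w i u := by
      intro i hi
      obtain ⟨j, hj, rfl⟩ := Finset.mem_image.mp hi
      have h1 : deg w j.1 = ∑ u ∈ t j, w j.1 u := by
        rw [deg, eq_comm]
        apply Finset.sum_filter_of_ne
        intro x _ hx
        omega
      rw [h1]
      apply Finset.sum_le_sum_of_subset
      intro u hu
      exact Finset.mem_biUnion.mpr ⟨j, hj, hu⟩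
    have key2 : ∑ i ∈ S, deg w i ≤ T.card * maxDeg w := by
      calc ∑ i ∈ S, deg w i ≤ ∑ i ∈ S, ∑ u ∈ T, w i u := Finset.sum_le_sum key1
        _ = ∑ u ∈ T, ∑ i ∈ S, w i u := Finset.sum_comm
        _ ≤ ∑ u ∈ T, ∑ i : V, w i u := by
            apply Finset.sum_le_sum
            intro u _
            exact Finset.sum_le_sum_of_subset (Finset.subset_univ S)
        _ = ∑ u ∈ T, deg w u := by
            refine Finset.sum_congr rfl fun u _ => ?_
            rw [deg]
            exact Finset.sum_congr rfl fun x _ => hsym x u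
        _ ≤ ∑ _u ∈ T, maxDeg w := by
            apply Finset.sum_le_sum
            intro u _
            exact Finset.le_sup (Finset.mem_univ u)
        _ = T.card * maxDeg w := by rw [Finset.sum_const, smul_eq_mul]
    have key3 : S.card * ((n - 1) * maxDeg w) ≤ n * (T.card * maxDeg w) := by
      calc S.card * ((n - 1) * maxDeg w) = ∑ _i ∈ S, (n - 1) * maxDeg w := by
            rw [Finset.sum_const, smul_eq_mul]
        _ ≤ ∑ i ∈ S, n * deg w i := Finset.sum_le_sum fun i hi => (hmemS i hi).1
        _ = n * ∑ i ∈ S, deg w i := by rw [Finset.mul_sum]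
        _ ≤ n * (T.card * maxDeg w) := Nat.mul_le_mul_left n key2
    by_contra hlt
    push_neg at hlt
    rw [← hcardS] at hlt
    have ha1 : 1 ≤ S.card := by
      have := Nat.zero_le T.card
      omega
    have hn1 : 1 ≤ n := le_trans ha1 (Finset.card_le_univ S)
    have h4 : S.card * (n - 1) ≤ n * T.card := by
      have h4' : S.card * (n - 1) * maxDeg w ≤ n * T.card * maxDeg w := by
        calc S.card * (n - 1) * maxDeg w = S.card * ((n - 1) * maxDeg w) := by ring
          _ ≤ n * (T.card * maxDeg w) := key3
          _ = n * T.card * maxDeg w := by ring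
      exact Nat.le_of_mul_le_mul_right h4' hD
    have en : (n - 1) + 1 = n := by omega
    have e1 : S.card * n = S.card * (n - 1) + S.card := by
      calc S.card * n = S.card * ((n - 1) + 1) := by rw [en]
        _ = S.card * (n - 1) + S.card := by ring
    have e2 : n * T.card + n ≤ n * S.card := by
      have : n * (T.card + 1) ≤ n * S.card := Nat.mul_le_mul_left n hlt
      calc n * T.card + n = n * (T.card + 1) := by ring
        _ ≤ n * S.card := this
    have e3 : n * S.card = S.card * n := Nat.mul_comm n S.card
    have h5 : n ≤ S.card := by omega
    have h6 : S = Finset.univ := Finset.eq_univ_of_card S (le_antisymm (Finset.card_le_univ S) h5)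
    obtain ⟨v0, u0, hvu⟩ := exists_deg_pos hD
    have hv0A : v0 ∈ A := (hmemS v0 (h6 ▸ Finset.mem_univ v0)).2
    have hu0A : u0 ∈ A := (hmemS u0 (h6 ▸ Finset.mem_univ u0)).2
    exact ((hA v0 u0 hvu).mp hv0A) hu0A
  obtain ⟨f, hfinj, hf⟩ := (Finset.all_card_le_biUnion_card_iff_exists_injective t).mp hall
  have hfw : ∀ i : ι, 1 ≤ w i.1 (f i) := fun i => (Finset.mem_filter.mp (hf i)).2
  have hfne : ∀ i : ι, i.1 ≠ f i := by
    intro i h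
    have := hfw i
    rw [← h, hlo] at this
    omega
  have hfA : ∀ i : ι, f i ∉ A := fun i => (hA i.1 (f i) (hfw i)).mp i.2.2
  refine ⟨(Finset.univ : Finset ι).image fun i => s(i.1, f i), ⟨?_, ?_, ?_⟩, ?_, ?_⟩
  · intro e he
    obtain ⟨i, -, rfl⟩ := Finset.mem_image.mp he
    simpa [Sym2.isDiag_iff_proj_eq] using hfne i
  · intro u v huv
    obtain ⟨i, -, hi⟩ := Finset.mem_image.mp huv
    rcases Sym2.eq_iff.mp hi with ⟨rfl, rfl⟩ | ⟨rfl, rfl⟩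
    · exact hfw i
    · rw [hsym]; exact hfw i
  · intro e he g hg hne x hx hxg
    obtain ⟨i, -, rfl⟩ := Finset.mem_image.mp he
    obtain ⟨j, -, rfl⟩ := Finset.mem_image.mp hg
    have hij : i ≠ j := fun h => hne (by rw [h])
    rcases Sym2.mem_iff.mp hx with rfl | rfl <;> rcases Sym2.mem_iff.mp hxg with h | h
    · exact hij (Subtype.ext h)
    · exact hfA j (h ▸ i.2.2)
    · exact hfA i (h ▸ j.2.2)
    · exact hij (hfinj h)
  · intro u v huv
    obtain ⟨i, -, hi⟩ := Finset.mem_image.mp huv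
    rcases Sym2.eq_iff.mp hi with ⟨rfl, rfl⟩ | ⟨rfl, rfl⟩
    · have := i.2.2; have := hfA i; tauto
    · have := i.2.2; have := hfA i; tauto
  · intro i hH hiA
    exact ⟨s(i, f ⟨i, hH, hiA⟩),
      Finset.mem_image.mpr ⟨⟨i, hH, hiA⟩, Finset.mem_univ _, rfl⟩, Sym2.mem_mk_left _ _⟩

lemma exists_heavy_matching {w : V → V → ℕ}
    (hsym : ∀ u v, w u v = w v u) (hlo : ∀ v, w v v = 0)
    (hD : 1 ≤ maxDeg w) (A : Set V)
    (hA : ∀ u t : V, 1 ≤ w u t → (u ∈ A ↔ t ∉ A)) :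
    ∃ N : Finset (Sym2 V), IsMatching w N ∧
      (∀ u t : V, s(u, t) ∈ N → (u ∈ A ↔ t ∉ A)) ∧
      ∀ i, Heavy w i → Saturates N i := by
  classical
  obtain ⟨NA, hNAm, hNAc, hNAs⟩ := exists_side_matching hsym hlo hD A hA
  have hA' : ∀ u t : V, 1 ≤ w u t → (u ∈ (Aᶜ : Set V) ↔ t ∉ (Aᶜ : Set V)) := by
    intro u t h
    have := hA u t h
    simp only [Set.mem_compl_iff]
    tauto
  obtain ⟨NB, hNBm, hNBc', hNBs⟩ := exists_side_matching hsym hlo hD (Aᶜ) hA'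
  have hNBc : ∀ u t : V, s(u, t) ∈ NB → (u ∈ A ↔ t ∉ A) := by
    intro u t h
    have := hNBc' u t h
    simp only [Set.mem_compl_iff] at this
    tauto
  -- iterate exchange to repair all heavy vertices
  suffices h : ∀ k (P : Finset (Sym2 V)), IsMatching w P →
      (∀ u t : V, s(u, t) ∈ P → (u ∈ A ↔ t ∉ A)) →
      (Finset.univ.filter fun i => Heavy w i ∧ ¬ Saturates P i).card ≤ k →
      ∃ N : Finset (Sym2 V), IsMatching w N ∧
        (∀ u t : V, s(u, t) ∈ N → (u ∈ A ↔ t ∉ A)) ∧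
        ∀ i, Heavy w i → Saturates N i by
    exact h _ NA hNAm hNAc le_rfl
  intro k
  induction k with
  | zero =>
    intro P hPm hPc hcard
    refine ⟨P, hPm, hPc, fun i hH => ?_⟩
    by_contra hs
    have : i ∈ Finset.univ.filter fun i => Heavy w i ∧ ¬ Saturates P i :=
      Finset.mem_filter.mpr ⟨Finset.mem_univ i, hH, hs⟩
    have := Finset.card_pos.mpr ⟨i, this⟩
    omega
  | succ k IH =>
    intro P hPm hPc hcard
    by_cases hempty : (Finset.univ.filter fun i => Heavy w i ∧ ¬ Saturates P i) = ∅
    · refine ⟨P, hPm, hPc, fun i hH => ?_⟩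
      by_contra hs
      have hmem : i ∈ Finset.univ.filter fun j => Heavy w j ∧ ¬ Saturates P j :=
        Finset.mem_filter.mpr ⟨Finset.mem_univ i, hH, hs⟩
      rw [hempty] at hmem
      exact absurd hmem (Finset.notMem_empty i)
    obtain ⟨h0, hh0⟩ := Finset.nonempty_iff_ne_empty.mpr hempty
    obtain ⟨-, hh0H, hh0P⟩ := Finset.mem_filter.mp hh0
    by_cases hh0A : h0 ∈ A
    · -- use NA
      obtain ⟨P', hP'm, hP'c, hP'h0, -, hdisj⟩ :=
        exchange w A P.card P NA le_rfl hPm hNAm hPc hNAc h0 (hNAs h0 hh0H hh0A) hh0P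
      refine IH P' hP'm hP'c ?_
      have hsub : (Finset.univ.filter fun i => Heavy w i ∧ ¬ Saturates P' i) ⊆
          (Finset.univ.filter fun i => Heavy w i ∧ ¬ Saturates P i).erase h0 := by
        intro i hi
        obtain ⟨-, hiH, hiP'⟩ := Finset.mem_filter.mp hi
        refine Finset.mem_erase.mpr ⟨fun h => hiP' (h ▸ hP'h0), Finset.mem_filter.mpr
          ⟨Finset.mem_univ i, hiH, fun hSatP => ?_⟩⟩
        rcases hdisj with hleft | ⟨x, -, hxN, hxA, hall⟩
        · exact hiP' (hleft i hSatP)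
        · have hix : i ≠ x := by
            rintro rfl
            exact hxN (hNAs i hiH (hxA.mpr hh0A))
          exact hiP' (hall i hSatP hix)
      have := Finset.card_le_card hsub
      have := Finset.card_erase_of_mem hh0
      have hpos : 0 < (Finset.univ.filter fun i => Heavy w i ∧ ¬ Saturates P i).card :=
        Finset.card_pos.mpr ⟨h0, hh0⟩
      omega
    · -- use NB
      have hh0B : h0 ∈ (Aᶜ : Set V) := hh0A
      obtain ⟨P', hP'm, hP'c, hP'h0, -, hdisj⟩ :=
        exchange w A P.card P NB le_rfl hPm hNBm hPc hNBc h0 (hNBs h0 hh0H hh0B) hh0P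
      refine IH P' hP'm hP'c ?_
      have hsub : (Finset.univ.filter fun i => Heavy w i ∧ ¬ Saturates P' i) ⊆
          (Finset.univ.filter fun i => Heavy w i ∧ ¬ Saturates P i).erase h0 := by
        intro i hi
        obtain ⟨-, hiH, hiP'⟩ := Finset.mem_filter.mp hi
        refine Finset.mem_erase.mpr ⟨fun h => hiP' (h ▸ hP'h0), Finset.mem_filter.mpr
          ⟨Finset.mem_univ i, hiH, fun hSatP => ?_⟩⟩
        rcases hdisj with hleft | ⟨x, -, hxN, hxA, hall⟩
        · exact hiP' (hleft i hSatP)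
        · have hix : i ≠ x := by
            rintro rfl
            have hiB : i ∈ (Aᶜ : Set V) := fun hiA => hh0A (hxA.mp hiA)
            exact hxN (hNBs i hiH hiB)
          exact hiP' (hall i hSatP hix)
      have := Finset.card_le_card hsub
      have := Finset.card_erase_of_mem hh0
      have hpos : 0 < (Finset.univ.filter fun i => Heavy w i ∧ ¬ Saturates P i).card :=
        Finset.card_pos.mpr ⟨h0, hh0⟩
      omega

end Hall
section Step

variable {V : Type} [Fintype V] [DecidableEq V]

lemma rfun_le_one (M : ℕ → Finset (Sym2 V)) (k : ℕ) (i : V) : Rfun M k i ≤ 1 := by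
  rw [Rfun]; split <;> omega

lemma ufun_le_one (M : ℕ → Finset (Sym2 V)) (k : ℕ) (i : V) : Ufun M k i ≤ 1 := by
  rw [Ufun]
  split
  · omega
  split
  · exact Nat.mul_le_mul (rfun_le_one M _ i) (rfun_le_one M _ i)
  · exact rfun_le_one M _ i

lemma critical_heavy {w : V → V → ℕ} {i : V} (h : Critical w i) : Heavy w i := by
  rw [Heavy, ← h]
  exact Nat.mul_le_mul_right _ (Nat.sub_le _ _)

lemma nsb_ge_of_critical {w : V → V → ℕ} {u : V → ℕ} {i : V}
    (hu : u i ≤ 1) (hc : Critical w i) : maxDeg w ≤ nsbWeight w u i := by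
  rw [nsbWeight, if_pos (critical_heavy hc), ← hc]
  have h1 : 1 ≤ 2 - u i := by omega
  calc deg w i = deg w i * 1 := (Nat.mul_one _).symm
    _ ≤ deg w i * (2 - u i) := Nat.mul_le_mul_left _ h1

lemma nsb_lt_of_nonheavy {w : V → V → ℕ} {u : V → ℕ} {i : V}
    (hn : 1 ≤ Fintype.card V) (h : ¬ Heavy w i) : nsbWeight w u i < maxDeg w := by
  rw [nsbWeight, if_neg h]
  rw [Heavy, not_le] at h
  have h2 : (Fintype.card V - 1) * maxDeg w ≤ Fintype.card V * maxDeg w :=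
    Nat.mul_le_mul_right _ (Nat.sub_le _ _)
  exact Nat.lt_of_mul_lt_mul_left (lt_of_lt_of_le h h2)

/-- The key step lemma: a weight-optimal matching saturates every critical vertex. -/
lemma opt_saturates_critical {w : V → V → ℕ}
    (hsym : ∀ u v, w u v = w v u) (hlo : ∀ v, w v v = 0)
    (hn : 1 ≤ Fintype.card V) (hD : 1 ≤ maxDeg w)
    (A : Set V) (hA : ∀ u t : V, 1 ≤ w u t → (u ∈ A ↔ t ∉ A))
    {u : V → ℕ} (hu : ∀ i, u i ≤ 1)
    {M : Finset (Sym2 V)} (hM : IsMatching w M)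
    (hopt : ∀ M' : Finset (Sym2 V), IsMatching w M' →
      matchWeight (nsbWeight w u) M' ≤ matchWeight (nsbWeight w u) M) :
    ∀ i, Critical w i → Saturates M i := by
  classical
  intro i hcrit
  by_contra hi
  set φ : V → ℕ := nsbWeight w u with hφ
  obtain ⟨N, hNm, hNc, hNs⟩ := exists_heavy_matching hsym hlo hD A hA
  have hMc : ∀ a b : V, s(a, b) ∈ M → (a ∈ A ↔ b ∉ A) :=
    fun a b h => hA a b (hM.2.1 a b h)
  have hNi : Saturates N i := hNs i (critical_heavy hcrit)
  obtain ⟨P, hPm, hPc, hPi, hPsub, hdisj⟩ :=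
    exchange w A M.card M N le_rfl hM hNm hMc hNc i hNi hi
  have hφi : maxDeg w ≤ φ i := nsb_ge_of_critical (hu i) hcrit
  have hlt : matchWeight φ M < matchWeight φ P := by
    rcases hdisj with hleft | ⟨x, hxM, hxN, hxA, hall⟩
    · apply Finset.sum_lt_sum
      · intro z _
        by_cases hz : Saturates M z
        · rw [if_pos hz, if_pos (hleft z hz)]
        · rw [if_neg hz]; exact Nat.zero_le _
      · refine ⟨i, Finset.mem_univ i, ?_⟩
        rw [if_neg hi, if_pos hPi]
        omega
    · have hxheavy : ¬ Heavy w x := fun h => hxN (hNs x h)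
      have hφx : φ x < maxDeg w := nsb_lt_of_nonheavy hn hxheavy
      have hix : i ≠ x := fun h => hi (h ▸ hxM)
      have step1 : ∑ z ∈ Finset.univ.erase x,
          ((if Saturates M z then φ z else 0) + (if z = i then φ i else 0)) ≤
          ∑ z ∈ Finset.univ.erase x, (if Saturates P z then φ z else 0) := by
        apply Finset.sum_le_sum
        intro z hz
        have hzx : z ≠ x := (Finset.mem_erase.mp hz).1
        by_cases hzi : z = i
        · subst hzi
          rw [if_neg hi, if_pos rfl, if_pos hPi]
          omega
        · rw [if_neg hzi]
          by_cases hzM : Saturates M z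
          · rw [if_pos hzM, if_pos (hall z hzM hzx)]
            omega
          · rw [if_neg hzM]; omega
      have step2 : ∑ z ∈ Finset.univ.erase x,
          ((if Saturates M z then φ z else 0) + (if z = i then φ i else 0)) =
          (∑ z ∈ Finset.univ.erase x, (if Saturates M z then φ z else 0)) + φ i := by
        rw [Finset.sum_add_distrib]
        congr 1
        rw [Finset.sum_ite_eq' (Finset.univ.erase x) i (fun _ => φ i),
          if_pos (Finset.mem_erase.mpr ⟨hix, Finset.mem_univ i⟩)]
      have step3 : matchWeight φ M =
          (∑ z ∈ Finset.univ.erase x, (if Saturates M z then φ z else 0)) +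
            (if Saturates M x then φ x else 0) := by
        rw [matchWeight, Finset.sum_erase_add]
        exact Finset.mem_univ x
      have step4 : (∑ z ∈ Finset.univ.erase x, (if Saturates P z then φ z else 0)) ≤
          matchWeight φ P := by
        rw [matchWeight, ← Finset.sum_erase_add Finset.univ _ (Finset.mem_univ x)]
        exact Nat.le_add_right _ _
      have hiteMx : (if Saturates M x then φ x else 0) ≤ φ x := by split <;> omega
      omega
  exact absurd (hopt P hPm) (not_le.mpr hlt)

end Step
section Degrees

variable {V : Type} [Fintype V] [DecidableEq V]

lemma remove_le {w : V → V → ℕ} {M : Finset (Sym2 V)} (u v : V) :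
    removeMatching w M u v ≤ w u v := by
  rw [removeMatching]; split <;> omega

lemma remove_symm {w : V → V → ℕ} (hsym : ∀ u v, w u v = w v u) (M : Finset (Sym2 V))
    (u v : V) : removeMatching w M u v = removeMatching w M v u := by
  simp only [removeMatching]
  rw [show s(v, u) = s(u, v) from Sym2.eq_swap, hsym u v]

lemma remove_loopless {w : V → V → ℕ} (hlo : ∀ v, w v v = 0) (M : Finset (Sym2 V))
    (v : V) : removeMatching w M v v = 0 := by
  rw [removeMatching]; split <;> simp [hlo v]

lemma deg_remove_le {w : V → V → ℕ} (M : Finset (Sym2 V)) (v : V) :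
    deg (removeMatching w M) v ≤ deg w v :=
  Finset.sum_le_sum fun u _ => remove_le v u

lemma deg_remove_ge {w : V → V → ℕ} {M : Finset (Sym2 V)} (hM : IsMatching w M) (v : V) :
    deg w v ≤ deg (removeMatching w M) v + 1 := by
  by_cases hv : Saturates M v
  · obtain ⟨y, hy⟩ := sat_iff.mp hv
    have huniq : ∀ u, u ≠ y → s(v, u) ∉ M := by
      intro u hu hmem
      exact hu (unique_partner hM hmem hy)
    have h1 : deg w v = (∑ u ∈ Finset.univ.erase y, w v u) + w v y :=
      (Finset.sum_erase_add _ _ (Finset.mem_univ y)).symm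
    have h2 : deg (removeMatching w M) v =
        (∑ u ∈ Finset.univ.erase y, removeMatching w M v u) + removeMatching w M v y :=
      (Finset.sum_erase_add _ _ (Finset.mem_univ y)).symm
    have h3 : ∑ u ∈ Finset.univ.erase y, removeMatching w M v u =
        ∑ u ∈ Finset.univ.erase y, w v u := by
      apply Finset.sum_congr rfl
      intro u hu
      rw [removeMatching, if_neg (huniq u (Finset.mem_erase.mp hu).1)]
    have h4 : removeMatching w M v y + 1 ≥ w v y := by
      rw [removeMatching]; split <;> omega
    omega
  · have h : ∀ u, removeMatching w M v u = w v u := by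
      intro u
      rw [removeMatching, if_neg]
      intro hmem
      exact hv ⟨_, hmem, Sym2.mem_mk_left v u⟩
    have : deg (removeMatching w M) v = deg w v :=
      Finset.sum_congr rfl fun u _ => h u
    omega

lemma deg_remove_lt {w : V → V → ℕ} {M : Finset (Sym2 V)} (hM : IsMatching w M)
    {v : V} (hv : Saturates M v) :
    deg (removeMatching w M) v + 1 ≤ deg w v := by
  obtain ⟨y, hy⟩ := sat_iff.mp hv
  have hw1 : 1 ≤ w v y := hM.2.1 v y hy
  have h1 : deg w v = (∑ u ∈ Finset.univ.erase y, w v u) + w v y :=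
    (Finset.sum_erase_add _ _ (Finset.mem_univ y)).symm
  have h2 : deg (removeMatching w M) v =
      (∑ u ∈ Finset.univ.erase y, removeMatching w M v u) + removeMatching w M v y :=
    (Finset.sum_erase_add _ _ (Finset.mem_univ y)).symm
  have h3 : ∑ u ∈ Finset.univ.erase y, removeMatching w M v u ≤
      ∑ u ∈ Finset.univ.erase y, w v u :=
    Finset.sum_le_sum fun u _ => remove_le v u
  have h4 : removeMatching w M v y + 1 = w v y := by
    rw [removeMatching, if_pos hy]; omega
  omega

lemma maxDeg_remove_ge {w : V → V → ℕ} {M : Finset (Sym2 V)} (hM : IsMatching w M) :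
    maxDeg w ≤ maxDeg (removeMatching w M) + 1 := by
  apply Finset.sup_le
  intro v _
  calc deg w v ≤ deg (removeMatching w M) v + 1 := deg_remove_ge hM v
    _ ≤ maxDeg (removeMatching w M) + 1 :=
        Nat.add_le_add_right (Finset.le_sup (Finset.mem_univ v)) 1

lemma maxDeg_remove_lt {w : V → V → ℕ} {M : Finset (Sym2 V)} (hM : IsMatching w M)
    (hcrit : ∀ i, Critical w i → Saturates M i) (hD : 1 ≤ maxDeg w) :
    maxDeg (removeMatching w M) + 1 ≤ maxDeg w := by
  have h : ∀ v, deg (removeMatching w M) v ≤ maxDeg w - 1 := by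
    intro v
    by_cases hc : Critical w v
    · have := deg_remove_lt hM (hcrit v hc)
      have := hc
      rw [Critical] at this
      omega
    · have h1 : deg w v ≤ maxDeg w := Finset.le_sup (Finset.mem_univ v)
      have h2 : deg w v ≠ maxDeg w := hc
      have := deg_remove_le (w := w) M v
      omega
  have : maxDeg (removeMatching w M) ≤ maxDeg w - 1 :=
    Finset.sup_le fun v _ => h v
  omega

lemma maxDeg_zero_iff {w : V → V → ℕ} : maxDeg w = 0 ↔ ∀ u v, w u v = 0 := by
  constructor
  · intro h u v
    have hdeg : deg w u ≤ 0 := h ▸ Finset.le_sup (f := fun v => deg w v) (Finset.mem_univ u)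
    rw [deg] at hdeg
    have := Finset.sum_eq_zero_iff.mp (Nat.le_zero.mp hdeg) v (Finset.mem_univ v)
    exact this
  · intro h
    apply Nat.le_zero.mp
    apply Finset.sup_le
    intro v _
    rw [deg]
    simp [h]

end Degrees
/-- If the support of `G(0)` is bipartite, every NSB evacuation run has
evacuation time exactly `Δ(0)`, and `Δ(0)` equals the minimum evacuation time `X′`. -/
theorem nsb_bipartite_evacuation_optimal {V : Type} [Fintype V] [DecidableEq V]
    (w0 : V → V → ℕ) (hsymm : ∀ u v, w0 u v = w0 v u) (hloop : ∀ v, w0 v v = 0)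
    (hn : 2 ≤ Fintype.card V)
    (hbip : BipartiteOn (support w0) Set.univ)
    (run : NSBRun w0)
    (X' : ℕ) (hX' : IsLeast {T' | CanEvacuate w0 T'} X') :
    IsLeast {k | ∀ u v : V, run.G k u v = 0} (maxDeg w0) ∧ maxDeg w0 = X' := by
  classical
  obtain ⟨A, hAbip⟩ := hbip
  have hn1 : 1 ≤ Fintype.card V := by omega
  -- basic invariants of the run
  have inv : ∀ k, (∀ u v, run.G k u v = run.G k v u) ∧ (∀ v, run.G k v v = 0) ∧
      (∀ u v, run.G k u v ≤ w0 u v) := by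
    intro k
    induction k with
    | zero => rw [run.init]; exact ⟨hsymm, hloop, fun u v => le_rfl⟩
    | succ k ih =>
      rw [run.step k]
      exact ⟨remove_symm ih.1 _, remove_loopless ih.2.1 _,
        fun u v => le_trans (remove_le u v) (ih.2.2 u v)⟩
  -- bipartiteness is inherited by each G k
  have hAk : ∀ k, ∀ u t : V, 1 ≤ run.G k u t → (u ∈ A ↔ t ∉ A) := by
    intro k u t h
    have h1 : 1 ≤ w0 u t := le_trans h ((inv k).2.2 u t)
    have h2 : 1 ≤ w0 t u := (hsymm u t) ▸ h1
    have hut : u ≠ t := by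
      rintro rfl
      have hl := (inv k).2.1 u
      omega
    exact hAbip (Set.mem_univ u) (Set.mem_univ t) ⟨hut, h1, h2⟩
  -- the maximum degree strictly decreases each slot
  have hdec : ∀ k, maxDeg (run.G k) ≤ maxDeg w0 - k := by
    intro k
    induction k with
    | zero => rw [run.init]; omega
    | succ k ih =>
      by_cases h0 : maxDeg (run.G k) = 0
      · have hz := maxDeg_zero_iff.mp h0
        have h1 : maxDeg (run.G (k + 1)) = 0 := by
          apply maxDeg_zero_iff.mpr
          intro u v
          rw [run.step k, removeMatching]
          split <;> simp [hz u v]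
        omega
      · have hD : 1 ≤ maxDeg (run.G k) := by omega
        have hcrit := opt_saturates_critical (inv k).1 (inv k).2.1 hn1 hD A (hAk k)
          (fun i => ufun_le_one run.M k i) (run.matching k) (run.opt k)
        have hstep := maxDeg_remove_lt (run.matching k) hcrit hD
        rw [← run.step k] at hstep
        omega
  have hzero : ∀ u v, run.G (maxDeg w0) u v = 0 := by
    apply maxDeg_zero_iff.mp
    have := hdec (maxDeg w0)
    omega
  -- the maximum degree decreases by at most one each slot
  have hinc : ∀ k, maxDeg w0 ≤ maxDeg (run.G k) + k := by
    intro k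
    induction k with
    | zero => rw [run.init]; omega
    | succ k ih =>
      have hstep := maxDeg_remove_ge (run.matching k)
      rw [← run.step k] at hstep
      omega
  have hlb : ∀ k ∈ {k | ∀ u v : V, run.G k u v = 0}, maxDeg w0 ≤ k := by
    intro k hk
    have h0 : maxDeg (run.G k) = 0 := maxDeg_zero_iff.mpr hk
    have := hinc k
    omega
  -- lower bound for X'
  have hXge : maxDeg w0 ≤ X' := by
    obtain ⟨Ms, hMm, hMc⟩ := hX'.1
    apply Finset.sup_le
    intro v _
    calc deg w0 v = ∑ u, (Finset.univ.filter fun j => s(v, u) ∈ Ms j).card := by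
          rw [deg]; exact Finset.sum_congr rfl fun u _ => (hMc v u).symm
      _ = ∑ u, ∑ j : Fin X', if s(v, u) ∈ Ms j then 1 else 0 := by
          exact Finset.sum_congr rfl fun u _ => Finset.card_filter _ _
      _ = ∑ j : Fin X', ∑ u, if s(v, u) ∈ Ms j then 1 else 0 := Finset.sum_comm
      _ = ∑ j : Fin X', (Finset.univ.filter fun u => s(v, u) ∈ Ms j).card := by
          exact Finset.sum_congr rfl fun j _ => (Finset.card_filter _ _).symm
      _ ≤ ∑ _j : Fin X', 1 := by
          apply Finset.sum_le_sum
          intro j _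
          apply Finset.card_le_one.mpr
          intro a ha b hb
          exact unique_partner (hMm j) (Finset.mem_filter.mp ha).2 (Finset.mem_filter.mp hb).2
      _ = X' := by simp
  -- telescoping count
  have hcount : ∀ k u v, run.G k u v +
      ((Finset.range k).filter fun j => s(u, v) ∈ run.M j).card = w0 u v := by
    intro k u v
    induction k with
    | zero => simp [run.init]
    | succ k ih =>
      rw [run.step k, removeMatching]
      rw [Finset.range_add_one, Finset.filter_insert]
      by_cases hmem : s(u, v) ∈ run.M k
      · rw [if_pos hmem, if_pos hmem, Finset.card_insert_of_notMem (by simp)]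
        have h1 : 1 ≤ run.G k u v := (run.matching k).2.1 u v hmem
        omega
      · rw [if_neg hmem, if_neg hmem]
        exact ih
  -- upper bound for X'
  have hXle : X' ≤ maxDeg w0 := by
    apply hX'.2
    refine ⟨fun j : Fin (maxDeg w0) => run.M j, ?_, ?_⟩
    · intro j
      obtain ⟨h1, h2, h3⟩ := run.matching j
      exact ⟨h1, fun u v h => le_trans (h2 u v h) ((inv j).2.2 u v), h3⟩
    · intro u v
      show (Finset.univ.filter fun j : Fin (maxDeg w0) => s(u, v) ∈ run.M ↑j).card = w0 u v
      have hc := hcount (maxDeg w0) u v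
      have hz := hzero u v
      have heq : (Finset.univ.filter fun j : Fin (maxDeg w0) => s(u, v) ∈ run.M j).card
          = ((Finset.range (maxDeg w0)).filter fun j => s(u, v) ∈ run.M j).card := by
        rw [Finset.card_filter, Finset.card_filter]
        exact Fin.sum_univ_eq_sum_range (fun j => if s(u, v) ∈ run.M j then 1 else 0)
          (maxDeg w0)
      omega
  exact ⟨⟨hzero, hlb⟩, le_antisymm hXge hXle⟩

end NSBPaper
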